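/- Let (Ω, ℱ, P) be a probability space, let T : Ω → [0, ∞] be a random variable, let λ > 0, and let ε ∈ [0, e^{-λ}). If P(T > n) ≤ ε^n for every natural number n ≥ 1, then E[e^{λT}] ≤ λ e^{λ} / (1 - e^{λ} ε) + 1; in particular E[e^{λT}] < ∞. -/

import Mathlib

open Real MeasureTheory ENNReal

private lemma stmt6_aux (l : ℝ) (_hl : 0 ≤ l) (N : ℕ) :
    Real.exp (l * N) ≤ 1 + ∑ n ∈ Finset.range N, l * Real.exp (l * (n + 1)) := by
  induction N with
  | zero => simp
  | succ k ih =>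
    rw [Finset.sum_range_succ]
    have hstep : Real.exp (l * ((k : ℝ) + 1)) - Real.exp (l * k) ≤
        l * Real.exp (l * ((k : ℝ) + 1)) := by
      have h1 : -l + 1 ≤ Real.exp (-l) := Real.add_one_le_exp (-l)
      have h2 : Real.exp (-l) * Real.exp (l * ((k : ℝ) + 1)) = Real.exp (l * k) := by
        rw [← Real.exp_add]; ring_nf
      nlinarith [Real.exp_pos (l * ((k : ℝ) + 1))]
    push_cast
    linarith

/-- Let `(Ω, ℱ, P)` be a probability space, `T : Ω → [0,∞]` a random
variable, `λ > 0`, `ε ∈ [0, e^(-λ))`. If `P(T > n) ≤ ε^n` for all `n ≥ 1`, then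
`E[e^(λT)] ≤ λ e^λ / (1 - e^λ ε) + 1`; in particular the exponential moment is finite.
Here `e^(λT)` is interpreted as `+∞` on `{T = ∞}`. -/
theorem stmt_6 {Ω : Type*} [MeasurableSpace Ω] (P : Measure Ω) [IsProbabilityMeasure P]
    (T : Ω → ℝ≥0∞) (hT : Measurable T)
    (l : ℝ) (hl : 0 < l) (ε : ℝ) (hε0 : 0 ≤ ε) (hε1 : ε < Real.exp (-l))
    (htail : ∀ n : ℕ, 1 ≤ n → P {ω | (n : ℝ≥0∞) < T ω} ≤ ENNReal.ofReal (ε ^ n)) :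
    (∫⁻ ω, (if T ω = ⊤ then ⊤ else ENNReal.ofReal (Real.exp (l * (T ω).toReal))) ∂P)
      ≤ ENNReal.ofReal (l * Real.exp l / (1 - Real.exp l * ε) + 1) ∧
    (∫⁻ ω, (if T ω = ⊤ then ⊤ else ENNReal.ofReal (Real.exp (l * (T ω).toReal))) ∂P) < ⊤ := by
  set q : ℝ := Real.exp l * ε with hq_def
  have hq0 : 0 ≤ q := mul_nonneg (Real.exp_pos l).le hε0
  have hq1 : q < 1 := by
    have := mul_lt_mul_of_pos_left hε1 (Real.exp_pos l)
    rwa [← Real.exp_add, add_neg_cancel, Real.exp_zero] at this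
  have h1q : 0 < 1 - q := by linarith
  -- The set {T = ⊤} is null
  have hnull : P {ω | T ω = ⊤} = 0 := by
    have hsub : ∀ n : ℕ, {ω | T ω = ⊤} ⊆ {ω | (n : ℝ≥0∞) < T ω} := by
      intro n ω hω
      simp only [Set.mem_setOf_eq] at *
      rw [hω]; exact ENNReal.natCast_lt_top n
    have hle : ∀ n : ℕ, 1 ≤ n → P {ω | T ω = ⊤} ≤ ENNReal.ofReal (ε ^ n) := fun n hn =>
      le_trans (measure_mono (hsub n)) (htail n hn)
    have hε1' : ε < 1 := lt_of_lt_of_le hε1 (Real.exp_le_one_iff.mpr (by linarith))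
    have htend : Filter.Tendsto (fun n : ℕ => ENNReal.ofReal (ε ^ n)) Filter.atTop (nhds 0) := by
      rw [show (0 : ℝ≥0∞) = ENNReal.ofReal 0 by simp]
      exact ENNReal.tendsto_ofReal (tendsto_pow_atTop_nhds_zero_of_lt_one hε0 hε1')
    have := ge_of_tendsto htend (Filter.eventually_atTop.mpr ⟨1, hle⟩)
    exact le_antisymm this (zero_le)
  have hae : ∀ᵐ ω ∂P, T ω ≠ ⊤ := by
    rw [Filter.eventually_iff, mem_ae_iff]
    convert hnull using 2
    ext ω; simp
  -- replace the integrand a.e.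
  have hcongr : (∫⁻ ω, (if T ω = ⊤ then ⊤ else ENNReal.ofReal (Real.exp (l * (T ω).toReal))) ∂P)
      = ∫⁻ ω, ENNReal.ofReal (Real.exp (l * (T ω).toReal)) ∂P := by
    apply lintegral_congr_ae
    filter_upwards [hae] with ω hω
    rw [if_neg hω]
  -- the indicator functions
  set c : ℕ → ℝ≥0∞ := fun n => ENNReal.ofReal (l * Real.exp (l * (n + 1))) with hc_def
  have hset : ∀ n : ℕ, MeasurableSet {ω | (n : ℝ≥0∞) < T ω} := fun n =>
    measurableSet_lt measurable_const hT
  -- pointwise bound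
  have hpt : ∀ ω, T ω ≠ ⊤ → ENNReal.ofReal (Real.exp (l * (T ω).toReal)) ≤
      1 + ∑' n : ℕ, Set.indicator {ω | (n : ℝ≥0∞) < T ω} (fun _ => c n) ω := by
    intro ω hω
    set t : ℝ := (T ω).toReal with ht_def
    have ht0 : 0 ≤ t := ENNReal.toReal_nonneg
    set N : ℕ := ⌈t⌉₊ with hN_def
    have h1 : Real.exp (l * t) ≤ Real.exp (l * N) :=
      Real.exp_le_exp.mpr (mul_le_mul_of_nonneg_left (Nat.le_ceil t) hl.le)
    have h2 : Real.exp (l * N) ≤ 1 + ∑ n ∈ Finset.range N, l * Real.exp (l * (n + 1)) :=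
      stmt6_aux l hl.le N
    have h3 : ENNReal.ofReal (Real.exp (l * t)) ≤
        1 + ∑ n ∈ Finset.range N, c n := by
      calc ENNReal.ofReal (Real.exp (l * t))
          ≤ ENNReal.ofReal (1 + ∑ n ∈ Finset.range N, l * Real.exp (l * (n + 1))) :=
            ENNReal.ofReal_le_ofReal (h1.trans h2)
        _ = ENNReal.ofReal 1 + ENNReal.ofReal (∑ n ∈ Finset.range N, l * Real.exp (l * (n + 1))) :=
            ENNReal.ofReal_add zero_le_one (Finset.sum_nonneg fun n _ =>
              mul_nonneg hl.le (Real.exp_pos _).le)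
        _ = 1 + ∑ n ∈ Finset.range N, c n := by
            rw [ENNReal.ofReal_one, ENNReal.ofReal_sum_of_nonneg
              (fun n _ => mul_nonneg hl.le (Real.exp_pos _).le)]
    refine h3.trans (add_le_add_right ?_ 1)
    have hmem : ∀ n ∈ Finset.range N, ω ∈ {ω | (n : ℝ≥0∞) < T ω} := by
      intro n hn
      simp only [Set.mem_setOf_eq]
      have hnt : (n : ℝ) < t := Nat.lt_ceil.mp (Finset.mem_range.mp hn)
      have : ((n : ℝ≥0∞)).toReal < (T ω).toReal := by simpa using hnt
      exact (ENNReal.toReal_lt_toReal (ENNReal.natCast_ne_top n) hω).mp this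
    calc ∑ n ∈ Finset.range N, c n
        = ∑ n ∈ Finset.range N, Set.indicator {ω | (n : ℝ≥0∞) < T ω} (fun _ => c n) ω :=
          Finset.sum_congr rfl fun n hn => (Set.indicator_of_mem (hmem n hn) (fun _ => c n)).symm
      _ ≤ ∑' n : ℕ, Set.indicator {ω | (n : ℝ≥0∞) < T ω} (fun _ => c n) ω :=
          ENNReal.sum_le_tsum _
  -- integrate the bound
  have hbound : (∫⁻ ω, ENNReal.ofReal (Real.exp (l * (T ω).toReal)) ∂P) ≤
      1 + ∑' n : ℕ, c n * P {ω | (n : ℝ≥0∞) < T ω} := by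
    calc (∫⁻ ω, ENNReal.ofReal (Real.exp (l * (T ω).toReal)) ∂P)
        ≤ ∫⁻ ω, (1 + ∑' n : ℕ, Set.indicator {ω | (n : ℝ≥0∞) < T ω} (fun _ => c n) ω) ∂P := by
          apply lintegral_mono_ae
          filter_upwards [hae] with ω hω using hpt ω hω
      _ = (∫⁻ _, (1 : ℝ≥0∞) ∂P) +
          ∫⁻ ω, ∑' n : ℕ, Set.indicator {ω | (n : ℝ≥0∞) < T ω} (fun _ => c n) ω ∂P :=
          lintegral_add_left measurable_const _
      _ = 1 + ∑' n : ℕ, c n * P {ω | (n : ℝ≥0∞) < T ω} := by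
          rw [lintegral_one, measure_univ]
          congr 1
          rw [lintegral_tsum fun n =>
            ((measurable_const.indicator (hset n)).aemeasurable)]
          exact tsum_congr fun n => lintegral_indicator_const (hset n) (c n)
  -- bound each term by a geometric series
  have hterm : ∀ n : ℕ, c n * P {ω | (n : ℝ≥0∞) < T ω} ≤
      ENNReal.ofReal (l * Real.exp l) * ENNReal.ofReal q ^ n := by
    intro n
    cases n with
    | zero =>
      calc c 0 * P {ω | ((0 : ℕ) : ℝ≥0∞) < T ω}
          ≤ c 0 * 1 := mul_le_mul_right prob_le_one _
        _ = ENNReal.ofReal (l * Real.exp l) * ENNReal.ofReal q ^ 0 := by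
            simp [hc_def]
    | succ k =>
      have h1 : c (k + 1) * P {ω | ((k + 1 : ℕ) : ℝ≥0∞) < T ω} ≤
          c (k + 1) * ENNReal.ofReal (ε ^ (k + 1)) :=
        mul_le_mul_right (htail (k + 1) (Nat.le_add_left 1 k)) _
      refine h1.trans (le_of_eq ?_)
      rw [hc_def, ← ENNReal.ofReal_pow hq0, ← ENNReal.ofReal_mul
        (mul_nonneg hl.le (Real.exp_pos _).le),
        ← ENNReal.ofReal_mul (mul_nonneg hl.le (Real.exp_pos _).le)]
      congr 1
      have hexp : Real.exp (l * ((k : ℝ) + 1 + 1)) = Real.exp l * Real.exp l ^ (k + 1) := by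
        rw [← Real.exp_nat_mul, ← Real.exp_add]
        push_cast
        ring_nf
      push_cast
      rw [hexp, hq_def, mul_pow]
      ring
  have hgeom : (∑' n : ℕ, c n * P {ω | (n : ℝ≥0∞) < T ω}) ≤
      ENNReal.ofReal (l * Real.exp l / (1 - q)) := by
    calc (∑' n : ℕ, c n * P {ω | (n : ℝ≥0∞) < T ω})
        ≤ ∑' n : ℕ, ENNReal.ofReal (l * Real.exp l) * ENNReal.ofReal q ^ n :=
          ENNReal.tsum_le_tsum hterm
      _ = ENNReal.ofReal (l * Real.exp l) * (1 - ENNReal.ofReal q)⁻¹ := by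
          rw [ENNReal.tsum_mul_left, ENNReal.tsum_geometric]
      _ = ENNReal.ofReal (l * Real.exp l / (1 - q)) := by
          rw [show (1 : ℝ≥0∞) - ENNReal.ofReal q = ENNReal.ofReal (1 - q) by
            rw [ENNReal.ofReal_sub 1 hq0, ENNReal.ofReal_one],
            ← ENNReal.ofReal_inv_of_pos h1q,
            ← ENNReal.ofReal_mul (mul_nonneg hl.le (Real.exp_pos _).le)]
          rw [div_eq_mul_inv]
  have hfinal : (∫⁻ ω, (if T ω = ⊤ then ⊤ else
      ENNReal.ofReal (Real.exp (l * (T ω).toReal))) ∂P)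
      ≤ ENNReal.ofReal (l * Real.exp l / (1 - Real.exp l * ε) + 1) := by
    rw [hcongr, ← hq_def]
    refine hbound.trans ?_
    rw [ENNReal.ofReal_add (div_nonneg (mul_nonneg hl.le (Real.exp_pos _).le) h1q.le)
      zero_le_one, ENNReal.ofReal_one, add_comm]
    exact add_le_add_left hgeom 1
  exact ⟨hfinal, lt_of_le_of_lt hfinal ENNReal.ofReal_lt_top⟩
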